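/- There exists a universal constant C > 0 such that for every r ∈ [2, ∞), every p ≥ 1, and all x, y ∈ ℝ^p, V(x + y) ≤ V(x) + yᵀV′(x) + C r V(y), where V(x) = ‖x‖_r² and V′(x) is the gradient of V at x, whose j-th component equals 2 ‖x‖_r^{2−r} |x_j|^{r−1} sign(x_j) for x ≠ 0 and 0 for x = 0. -/

import Mathlib

open Finset

open Set Filter

lemma rpow_sub_rpow_le {r M u v : ℝ} (hr : 2 ≤ r) (hv : 0 ≤ v) (hvu : v ≤ u) (huM : u ≤ M) :
    u ^ (r - 1) - v ^ (r - 1) ≤ (r - 1) * M ^ (r - 2) * (u - v) := by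
  rcases eq_or_lt_of_le hvu with rfl | hlt
  · simp
  have hcont : ContinuousOn (fun t : ℝ => t ^ (r - 1)) (Icc v u) := fun t _ =>
    (Real.continuousAt_rpow_const t (r - 1) (Or.inr (by linarith))).continuousWithinAt
  have hderiv : ∀ t ∈ Ioo v u, HasDerivAt (fun t : ℝ => t ^ (r - 1))
      ((r - 1) * t ^ (r - 1 - 1)) t := fun t ht =>
    Real.hasDerivAt_rpow_const (Or.inl (by nlinarith [ht.1] : t ≠ 0))
  obtain ⟨c, hc, hceq⟩ := exists_hasDerivAt_eq_slope (fun t : ℝ => t ^ (r - 1))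
    (fun t => (r - 1) * t ^ (r - 1 - 1)) hlt hcont hderiv
  have hc0 : 0 < c := lt_of_le_of_lt hv hc.1
  have hcM : c ≤ M := le_trans hc.2.le huM
  have hbound : c ^ (r - 1 - 1) ≤ M ^ (r - 2) := by
    have : r - 1 - 1 = r - 2 := by ring
    rw [this]
    exact Real.rpow_le_rpow hc0.le hcM (by linarith)
  have huv : 0 < u - v := by linarith
  have := hceq
  have heq : u ^ (r - 1) - v ^ (r - 1) = (r - 1) * c ^ (r - 1 - 1) * (u - v) := by
    field_simp at this ⊢
    linarith [this]
  rw [heq]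
  have h1 : 0 ≤ r - 1 := by linarith
  nlinarith [mul_le_mul_of_nonneg_left hbound h1, Real.rpow_nonneg hc0.le (r - 1 - 1)]

lemma psi_eq_nonneg {q t : ℝ} (hq : 0 < q) (ht : 0 ≤ t) : |t| ^ q * Real.sign t = t ^ q := by
  rcases eq_or_lt_of_le ht with rfl | ht'
  · simp [Real.zero_rpow hq.ne']
  · rw [abs_of_pos ht', Real.sign_of_pos ht', mul_one]

lemma psi_eq_nonpos {q t : ℝ} (hq : 0 < q) (ht : t ≤ 0) : |t| ^ q * Real.sign t = -(-t) ^ q := by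
  rcases eq_or_lt_of_le ht with rfl | ht'
  · simp [Real.zero_rpow hq.ne']
  · rw [abs_of_neg ht', Real.sign_of_neg ht', mul_neg_one]

lemma abs_psi {q t : ℝ} (hq : 0 < q) : |(|t| ^ q * Real.sign t)| = |t| ^ q := by
  rcases lt_trichotomy t 0 with h | rfl | h
  · rw [Real.sign_of_neg h, mul_neg_one, abs_neg, abs_of_nonneg (Real.rpow_nonneg (abs_nonneg t) q)]
  · simp [Real.zero_rpow hq.ne']
  · rw [Real.sign_of_pos h, mul_one, abs_of_nonneg (Real.rpow_nonneg (abs_nonneg t) q)]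

/-- ψ(t) = |t|^(r-1) sign t is Lipschitz with constant (r-1) M^(r-2) on [-M, M]. -/
lemma psi_lipschitz {r M u v : ℝ} (hr : 2 ≤ r) (hu : |u| ≤ M) (hv : |v| ≤ M) :
    |(|u| ^ (r - 1) * Real.sign u) - (|v| ^ (r - 1) * Real.sign v)| ≤
      (r - 1) * M ^ (r - 2) * |u - v| := by
  have hq : (0 : ℝ) < r - 1 := by linarith
  have hM0 : 0 ≤ M := le_trans (abs_nonneg u) hu
  have hMpow : 0 ≤ M ^ (r - 2) := Real.rpow_nonneg hM0 _
  -- key one-sided claim for v ≤ u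
  have key : ∀ a b : ℝ, |a| ≤ M → |b| ≤ M → b ≤ a →
      (|a| ^ (r - 1) * Real.sign a) - (|b| ^ (r - 1) * Real.sign b) ≥ 0 ∧
      (|a| ^ (r - 1) * Real.sign a) - (|b| ^ (r - 1) * Real.sign b) ≤
        (r - 1) * M ^ (r - 2) * (a - b) := by
    intro a b ha hb hba
    rcases le_or_gt 0 b with hb0 | hb0
    · -- 0 ≤ b ≤ a
      have ha0 : 0 ≤ a := le_trans hb0 hba
      rw [psi_eq_nonneg hq ha0, psi_eq_nonneg hq hb0]
      constructor
      · have := Real.rpow_le_rpow hb0 hba hq.le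
        linarith
      · exact rpow_sub_rpow_le hr hb0 hba (by rwa [abs_of_nonneg ha0] at ha)
    · rcases le_or_gt a 0 with ha0 | ha0
      · -- b < a ≤ 0
        rw [psi_eq_nonpos hq ha0, psi_eq_nonpos hq hb0.le]
        have h1 : 0 ≤ -a := by linarith
        have h2 : -a ≤ -b := by linarith
        have h3 : -b ≤ M := by rwa [abs_of_neg hb0] at hb
        constructor
        · have := Real.rpow_le_rpow h1 h2 hq.le
          linarith
        · have := rpow_sub_rpow_le hr h1 h2 h3
          have heq : (-b) - (-a) = a - b := by ring
          rw [heq] at this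
          linarith
      · -- b < 0 < a
        rw [psi_eq_nonneg hq ha0.le, psi_eq_nonpos hq hb0.le]
        have haM : a ≤ M := by rwa [abs_of_pos ha0] at ha
        have hbM : -b ≤ M := by rwa [abs_of_neg hb0] at hb
        have hpa : 0 ≤ a ^ (r - 1) := Real.rpow_nonneg ha0.le _
        have hpb : 0 ≤ (-b) ^ (r - 1) := Real.rpow_nonneg (by linarith) _
        constructor
        · linarith
        · -- a^(r-1) ≤ M^(r-2) * a  and  (-b)^(r-1) ≤ M^(r-2) * (-b)
          have bnda : a ^ (r - 1) ≤ M ^ (r - 2) * a := by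
            have : a ^ (r - 1) = a ^ (r - 2) * a := by
              rw [← Real.rpow_add_one ha0.ne' (r - 2)]; ring_nf
            rw [this]
            exact mul_le_mul_of_nonneg_right
              (Real.rpow_le_rpow ha0.le haM (by linarith)) ha0.le
          have bndb : (-b) ^ (r - 1) ≤ M ^ (r - 2) * (-b) := by
            have hnb : (0:ℝ) < -b := by linarith
            have : (-b) ^ (r - 1) = (-b) ^ (r - 2) * (-b) := by
              rw [← Real.rpow_add_one hnb.ne' (r - 2)]; ring_nf
            rw [this]
            exact mul_le_mul_of_nonneg_right
              (Real.rpow_le_rpow hnb.le hbM (by linarith)) hnb.le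
          have hr1 : 1 ≤ r - 1 := by linarith
          have habs : M ^ (r - 2) * a + M ^ (r - 2) * (-b) ≤
              (r - 1) * M ^ (r - 2) * (a - b) := by
            nlinarith [mul_nonneg hMpow (by linarith : (0:ℝ) ≤ a - b)]
          linarith
  rcases le_total v u with h | h
  · obtain ⟨h1, h2⟩ := key u v hu hv h
    rw [abs_of_nonneg h1, abs_of_nonneg (by linarith : (0:ℝ) ≤ u - v)]
    exact h2
  · obtain ⟨h1, h2⟩ := key v u hv hu h
    rw [abs_sub_comm, abs_sub_comm u v, abs_of_nonneg h1,
      abs_of_nonneg (by linarith : (0:ℝ) ≤ v - u)]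
    exact h2
lemma myHasDerivAt_abs_rpow {r : ℝ} (hr : 2 ≤ r) (t : ℝ) :
    HasDerivAt (fun s : ℝ => |s| ^ r) (r * (|t| ^ (r - 1) * Real.sign t)) t := by
  convert hasDerivAt_abs_rpow t (by linarith : 1 < r) using 1
  rcases lt_trichotomy t 0 with ht | rfl | ht
  · have habs : (0:ℝ) < |t| := abs_pos.mpr ht.ne
    have : |t| ^ (r - 1) = |t| ^ (r - 2) * |t| := by
      rw [← Real.rpow_add_one habs.ne' (r - 2)]; ring_nf
    rw [this, Real.sign_of_neg ht, abs_of_neg ht]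
    ring
  · simp
  · have habs : (0:ℝ) < |t| := abs_pos.mpr ht.ne'
    have : |t| ^ (r - 1) = |t| ^ (r - 2) * |t| := by
      rw [← Real.rpow_add_one habs.ne' (r - 2)]; ring_nf
    rw [this, Real.sign_of_pos ht, abs_of_pos ht]
    ring
/-- Scalar second-order bound: `|a+b|^r ≤ |a|^r + r ψ(a) b + r(r-1)(|a|+|b|)^(r-2) b²`. -/
lemma scalar_taylor {r : ℝ} (hr : 2 ≤ r) (a b : ℝ) :
    |a + b| ^ r ≤ |a| ^ r + r * (|a| ^ (r - 1) * Real.sign a) * b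
      + r * (r - 1) * (|a| + |b|) ^ (r - 2) * b ^ 2 := by
  set M : ℝ := |a| + |b| with hM
  set ψ : ℝ → ℝ := fun t => |t| ^ (r - 1) * Real.sign t with hψ
  set h : ℝ → ℝ := fun s => |a + s| ^ r - r * ψ a * s with hh
  have hd : ∀ s : ℝ, HasDerivAt h (r * ψ (a + s) - r * ψ a) s := by
    intro s
    have h1 : HasDerivAt (fun s : ℝ => |a + s| ^ r) (r * ψ (a + s)) s := by
      have hinner : HasDerivAt (fun s : ℝ => a + s) 1 s := (hasDerivAt_id s).const_add a
      have houter := myHasDerivAt_abs_rpow hr (a + s)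
      have hc := houter.comp s hinner
      rw [mul_one] at hc
      exact hc
    have h2 : HasDerivAt (fun s : ℝ => r * ψ a * s) (r * ψ a) s := by
      simpa using (hasDerivAt_id s).const_mul (r * ψ a)
    exact h1.sub h2
  have hbound : ∀ s ∈ uIcc (0:ℝ) b, ‖r * ψ (a + s) - r * ψ a‖ ≤
      r * (r - 1) * M ^ (r - 2) * |b| := by
    intro s hs
    have hsb : |s| ≤ |b| := by
      rw [Set.uIcc_eq_union] at hs
      rcases hs with hs | hs
      · rw [abs_le]; constructor
        · linarith [hs.1, abs_nonneg b, neg_abs_le b]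
        · exact le_trans hs.2 (le_abs_self b)
      · rw [abs_le]; constructor
        · linarith [hs.1, neg_abs_le b]
        · linarith [hs.2, abs_nonneg b]
    have h1 : |a + s| ≤ M := le_trans (abs_add_le a s) (by rw [hM]; linarith)
    have h2 : |a| ≤ M := by rw [hM]; linarith [abs_nonneg b]
    have key := psi_lipschitz hr h1 h2
    have : |(a + s) - a| = |s| := by ring_nf
    rw [this] at key
    rw [Real.norm_eq_abs, hψ]
    have : r * ψ (a + s) - r * ψ a = r * (ψ (a + s) - ψ a) := by ring
    rw [this, abs_mul, abs_of_nonneg (by linarith : (0:ℝ) ≤ r)]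
    have hM2 : 0 ≤ M ^ (r - 2) := Real.rpow_nonneg (by rw [hM]; positivity) _
    have hc : (0:ℝ) ≤ r * (r - 1) * M ^ (r - 2) := by
      apply mul_nonneg (mul_nonneg (by linarith) (by linarith)) hM2
    calc r * |ψ (a + s) - ψ a| ≤ r * ((r - 1) * M ^ (r - 2) * |s|) := by
          apply mul_le_mul_of_nonneg_left _ (by linarith : (0:ℝ) ≤ r)
          exact key
      _ = (r * (r - 1) * M ^ (r - 2)) * |s| := by ring
      _ ≤ (r * (r - 1) * M ^ (r - 2)) * |b| := mul_le_mul_of_nonneg_left hsb hc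
      _ = r * (r - 1) * M ^ (r - 2) * |b| := by ring
  have := Convex.norm_image_sub_le_of_norm_hasDerivWithin_le
    (fun s hs => (hd s).hasDerivWithinAt)
    hbound (convex_uIcc (0:ℝ) b) (left_mem_uIcc) (right_mem_uIcc)
  rw [Real.norm_eq_abs, Real.norm_eq_abs, sub_zero] at this
  have hb2 : |b| * |b| = b ^ 2 := by rw [← abs_mul, abs_mul_self]; ring
  have hfin : h b - h 0 ≤ r * (r - 1) * M ^ (r - 2) * b ^ 2 := by
    calc h b - h 0 ≤ |h b - h 0| := le_abs_self _
      _ ≤ r * (r - 1) * M ^ (r - 2) * |b| * |b| := this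
      _ = r * (r - 1) * M ^ (r - 2) * b ^ 2 := by rw [mul_assoc, hb2]
  have hh0 : h 0 = |a| ^ r := by simp [hh]
  have hhb : h b = |a + b| ^ r - r * ψ a * b := by simp [hh]
  rw [hh0, hhb] at hfin
  simp only [hψ] at hfin
  linarith
lemma sq_of_rpow {c r : ℝ} (hc : 0 ≤ c) : (c ^ (1/r)) ^ (2:ℕ) = c ^ ((2:ℝ)/r) := by
  rw [← Real.rpow_natCast (c ^ (1/r)) 2, ← Real.rpow_mul hc]
  congr 1
  push_cast
  ring


set_option maxHeartbeats 2000000 in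
/-- Nemirovski-type second-order smoothness of the squared ℓ^r-norm: there is a
universal constant C > 0 such that for every r ∈ [2, ∞), p ≥ 1 and x, y ∈ ℝ^p,
V(x + y) ≤ V(x) + yᵀV′(x) + C r V(y), where V(x) = ‖x‖_r² and V′ is the gradient
of V, with j-th component 2‖x‖_r^{2−r}|x_j|^{r−1} sign(x_j) (and V′(0) = 0). -/
theorem squared_lr_norm_smoothness :
    ∃ C : ℝ, 0 < C ∧
      ∀ (r : ℝ), 2 ≤ r → ∀ (p : ℕ), 1 ≤ p → ∀ x y : Fin p → ℝ,
        (fun z : Fin p → ℝ => ((∑ i, |z i| ^ r) ^ (1 / r)) ^ 2) (x + y) ≤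
          (fun z : Fin p → ℝ => ((∑ i, |z i| ^ r) ^ (1 / r)) ^ 2) x +
            (∑ j, y j *
              (if x = 0 then 0 else
                2 * ((∑ i, |x i| ^ r) ^ (1 / r)) ^ (2 - r) * |x j| ^ (r - 1) * Real.sign (x j))) +
            C * r * (fun z : Fin p → ℝ => ((∑ i, |z i| ^ r) ^ (1 / r)) ^ 2) y := by
  refine ⟨6, by norm_num, ?_⟩
  intro r hr p hp x y
  simp only [Pi.add_apply]
  have hr0 : (0:ℝ) < r := by linarith
  have hr1 : (1:ℝ) < r := by linarith
  by_cases hx : x = 0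
  · subst hx
    simp only [if_pos, Pi.zero_apply, abs_zero, Real.zero_rpow hr0.ne', Finset.sum_const_zero,
      mul_zero, zero_add]
    have h0 : ((0:ℝ) ^ (1/r)) ^ (2:ℕ) = 0 := by
      rw [Real.zero_rpow (by positivity : 1/r ≠ 0)]; norm_num
    rw [h0]
    have hNy2 : (0:ℝ) ≤ ((∑ i, |y i| ^ r) ^ (1/r)) ^ (2:ℕ) := sq_nonneg _
    have h5 : 1 * (((∑ i, |y i| ^ r) ^ (1/r)) ^ (2:ℕ)) ≤ (6*r) * (((∑ i, |y i| ^ r) ^ (1/r)) ^ (2:ℕ)) :=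
      mul_le_mul_of_nonneg_right (by linarith : (1:ℝ) ≤ 6*r) hNy2
    linarith
  · simp only [if_neg hx]
    have hrne : r ≠ 0 := ne_of_gt hr0
    have hr1ne : r - 1 ≠ 0 := ne_of_gt (by linarith : (0:ℝ) < r - 1)
    set B := ∑ i, |x i| ^ r with hBdef
    set A := ∑ i, |x i + y i| ^ r with hAdef
    set Dy := ∑ i, |y i| ^ r with hDydef
    have hB0 : 0 < B := by
      obtain ⟨i, hi⟩ := Function.ne_iff.mp hx
      exact Finset.sum_pos' (fun j _ => Real.rpow_nonneg (abs_nonneg _) r)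
        ⟨i, Finset.mem_univ i, Real.rpow_pos_of_pos (abs_pos.mpr hi) r⟩
    have hA0 : 0 ≤ A := Finset.sum_nonneg fun i _ => Real.rpow_nonneg (abs_nonneg _) r
    have hDy0 : 0 ≤ Dy := Finset.sum_nonneg fun i _ => Real.rpow_nonneg (abs_nonneg _) r
    set Nx := B ^ (1/r) with hNxdef
    set Ny := Dy ^ (1/r) with hNydef
    have hNx0 : 0 < Nx := Real.rpow_pos_of_pos hB0 _
    have hNy0 : 0 ≤ Ny := Real.rpow_nonneg hDy0 _
    -- the linear (gradient) term
    set Sψ := ∑ j, y j * (|x j| ^ (r - 1) * Real.sign (x j)) with hSdef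
    have hGG : (∑ j, y j * (2 * Nx ^ (2 - r) * |x j| ^ (r - 1) * Real.sign (x j)))
        = 2 * Nx ^ (2 - r) * Sψ := by
      rw [hSdef, Finset.mul_sum]
      exact Finset.sum_congr rfl fun j _ => by ring
    -- Hölder bound for the gradient term
    have hq : Real.HolderConjugate r (r / (r-1)) := by
      rw [Real.holderConjugate_iff]
      constructor
      · exact hr1
      · field_simp
        ring
    have hSψ : -(Ny * Nx ^ (r-1)) ≤ Sψ := by
      have hH := Real.inner_le_Lp_mul_Lq Finset.univ (fun j => -(y j))
        (fun j => |x j| ^ (r - 1) * Real.sign (x j)) hq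
      have hL : (∑ j, -(y j) * (|x j| ^ (r - 1) * Real.sign (x j))) = -Sψ := by
        rw [hSdef, ← Finset.sum_neg_distrib]
        exact Finset.sum_congr rfl fun j _ => by ring
      have hR1 : (∑ j, |-(y j)| ^ r) = Dy := by
        simp [abs_neg, hDydef]
      have hR2 : (∑ j, |(|x j| ^ (r - 1) * Real.sign (x j))| ^ (r/(r-1))) = B := by
        apply Finset.sum_congr rfl
        intro j _
        rw [abs_psi (by linarith : (0:ℝ) < r - 1)]
        rw [← Real.rpow_mul (abs_nonneg (x j))]
        congr 1
        field_simp
      have hR3 : B ^ (1/(r/(r-1))) = Nx ^ (r-1) := by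
        rw [hNxdef, ← Real.rpow_mul hB0.le]
        congr 1
        field_simp
      rw [hL, hR1, hR2, hR3] at hH
      rw [← hNydef] at hH
      linarith
    have hG : -(2 * Nx * Ny) ≤ ∑ j, y j * (2 * Nx ^ (2 - r) * |x j| ^ (r - 1) * Real.sign (x j)) := by
      rw [hGG]
      have h1 : -(Ny * Nx ^ (r-1)) * (2 * Nx ^ (2 - r)) ≤ Sψ * (2 * Nx ^ (2 - r)) :=
        mul_le_mul_of_nonneg_right hSψ (by positivity)
      have h2 : Nx ^ (2 - r) * Nx ^ (r - 1) = Nx := by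
        rw [← Real.rpow_add hNx0]
        norm_num
      have h3 : -(Ny * Nx ^ (r-1)) * (2 * Nx ^ (2 - r)) = -2 * Ny * (Nx ^ (2-r) * Nx ^ (r-1)) := by
        ring
      rw [h2] at h3
      linarith [h1, h3.symm.le, h3.le]
    -- Minkowski
    have hMink : A ^ (1/r) ≤ Nx + Ny := by
      have := Real.Lp_add_le Finset.univ x y (by linarith : (1:ℝ) ≤ r)
      rw [← hAdef, ← hBdef, ← hDydef] at this
      exact this
    rcases le_or_gt Nx (r * Ny) with hbig | hsm
    · -- big y case
      have h1 : (A ^ (1/r)) ^ (2:ℕ) ≤ (Nx + Ny) ^ (2:ℕ) :=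
        pow_le_pow_left₀ (Real.rpow_nonneg hA0 _) hMink 2
      have hexp : (Nx + Ny) ^ (2:ℕ) = Nx ^ (2:ℕ) + 2 * (Nx * Ny) + Ny ^ (2:ℕ) := by ring
      have h2 : Nx * Ny ≤ r * Ny ^ (2:ℕ) := by
        have := mul_le_mul_of_nonneg_right hbig hNy0
        calc Nx * Ny ≤ r * Ny * Ny := this
          _ = r * Ny ^ (2:ℕ) := by ring
      have h3 : 1 * Ny ^ (2:ℕ) ≤ r * Ny ^ (2:ℕ) :=
        mul_le_mul_of_nonneg_right (by linarith : (1:ℝ) ≤ r) (sq_nonneg Ny)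
      have h4 : (0:ℝ) ≤ r * Ny ^ (2:ℕ) := mul_nonneg hr0.le (sq_nonneg Ny)
      linarith [h1, hexp.le, hexp.symm.le, h2, h3, h4, hG]
    · -- small y case
      have hNyNx : Ny * r ≤ Nx := by nlinarith
      -- convert nat squares to rpow
      have hA2 : (A ^ (1/r)) ^ (2:ℕ) = A ^ ((2:ℝ)/r) := sq_of_rpow hA0
      have hNx2 : (Nx:ℝ) ^ (2:ℕ) = B ^ ((2:ℝ)/r) := sq_of_rpow hB0.le
      have hNy2 : (Ny:ℝ) ^ (2:ℕ) = Dy ^ ((2:ℝ)/r) := sq_of_rpow hDy0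
      set E := B ^ ((2:ℝ)/r - 1) with hEdef
      have hE0 : 0 < E := Real.rpow_pos_of_pos hB0 _
      have hE : E = Nx ^ (2 - r) := by
        rw [hEdef, hNxdef, ← Real.rpow_mul hB0.le]
        congr 1
        field_simp
      -- Bernoulli / concavity of t ↦ t^(2/r)
      have hconc : A ^ ((2:ℝ)/r) ≤ B ^ ((2:ℝ)/r) + (2/r) * E * (A - B) := by
        have hs : (-1:ℝ) ≤ A/B - 1 := by
          have : (0:ℝ) ≤ A/B := div_nonneg hA0 hB0.le
          linarith
        have hbern := rpow_one_add_le_one_add_mul_self hs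
          (by positivity : (0:ℝ) ≤ 2/r) (by rw [div_le_one hr0]; linarith : (2:ℝ)/r ≤ 1)
        have h1s : (1:ℝ) + (A/B - 1) = A/B := by ring
        rw [h1s] at hbern
        have hBp : 0 < B ^ ((2:ℝ)/r) := Real.rpow_pos_of_pos hB0 _
        have hAB : A ^ ((2:ℝ)/r) = (A/B) ^ ((2:ℝ)/r) * B ^ ((2:ℝ)/r) := by
          rw [Real.div_rpow hA0 hB0.le]
          field_simp
        have hmu : (A/B) ^ ((2:ℝ)/r) * B ^ ((2:ℝ)/r)
            ≤ (1 + (2/r) * (A/B - 1)) * B ^ ((2:ℝ)/r) :=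
          mul_le_mul_of_nonneg_right hbern hBp.le
        have hrw : (1 + (2/r) * (A/B - 1)) * B ^ ((2:ℝ)/r)
            = B ^ ((2:ℝ)/r) + (2/r) * E * (A - B) := by
          rw [hEdef, Real.rpow_sub_one hB0.ne']
          field_simp
        rw [hAB]
        rw [hrw] at hmu
        exact hmu
      -- summed scalar Taylor bound
      set T := ∑ i, (|x i| + |y i|) ^ (r - 2) * (y i) ^ 2 with hTdef
      have hT0 : 0 ≤ T := Finset.sum_nonneg fun i _ =>
        mul_nonneg (Real.rpow_nonneg (by positivity) _) (sq_nonneg _)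
      have hsum : A - B ≤ r * Sψ + r * (r-1) * T := by
        have h1 : A ≤ ∑ i, (|x i| ^ r + r * (|x i| ^ (r - 1) * Real.sign (x i)) * y i
            + r * (r - 1) * (|x i| + |y i|) ^ (r - 2) * (y i) ^ 2) := by
          rw [hAdef]
          exact Finset.sum_le_sum fun i _ => scalar_taylor hr (x i) (y i)
        have h2 : (∑ i, (|x i| ^ r + r * (|x i| ^ (r - 1) * Real.sign (x i)) * y i
            + r * (r - 1) * (|x i| + |y i|) ^ (r - 2) * (y i) ^ 2))
            = B + r * Sψ + r * (r-1) * T := by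
          rw [hBdef, hSdef, hTdef, Finset.sum_add_distrib, Finset.sum_add_distrib,
            Finset.mul_sum, Finset.mul_sum]
          congr 1
          congr 1
          · exact Finset.sum_congr rfl fun i _ => by ring
          · exact Finset.sum_congr rfl fun i _ => by ring
        rw [h2] at h1
        linarith
      -- Hölder for T
      set Nz := (∑ i, (|x i| + |y i|) ^ r) ^ (1/r) with hNzdef
      have hz0 : ∀ i, (0:ℝ) ≤ |x i| + |y i| := fun i => by positivity
      have hZ0 : 0 ≤ ∑ i, (|x i| + |y i|) ^ r :=
        Finset.sum_nonneg fun i _ => Real.rpow_nonneg (hz0 i) _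
      have hNz0 : 0 ≤ Nz := Real.rpow_nonneg hZ0 _
      have hT : T ≤ Nz ^ (r - 2) * Ny ^ (2:ℕ) := by
        rcases eq_or_lt_of_le hr with h2r | h2r
        · -- r = 2
          subst h2r
          have habs2 : ∀ i, |y i| ^ (2:ℝ) = y i ^ (2:ℕ) := fun i => by
            rw [show (2:ℝ) = ((2:ℕ):ℝ) by norm_num, Real.rpow_natCast, sq_abs]
          have hTeq : T = Dy := by
            rw [hTdef, hDydef]
            apply Finset.sum_congr rfl
            intro i _
            rw [show (2:ℝ) - 2 = 0 by norm_num, Real.rpow_zero, one_mul, habs2 i]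
          have hNye : Ny ^ (2:ℕ) = Dy := by
            rw [hNy2, show (2:ℝ)/2 = 1 by norm_num, Real.rpow_one]
          rw [hTeq, hNye, show (2:ℝ) - 2 = 0 by norm_num, Real.rpow_zero, one_mul]
        · -- r > 2
          have hr2ne : r - 2 ≠ 0 := ne_of_gt (by linarith : (0:ℝ) < r - 2)
          have hpq' : Real.HolderConjugate (r/(r-2)) (r/2) := by
            rw [Real.holderConjugate_iff]
            constructor
            · rw [lt_div_iff₀ (by linarith : (0:ℝ) < r - 2)]
              linarith
            · field_simp
              ring
          have hH := Real.inner_le_Lp_mul_Lq Finset.univ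
            (fun i => (|x i| + |y i|) ^ (r - 2)) (fun i => (y i) ^ 2) hpq'
          have hL : (∑ i, (|x i| + |y i|) ^ (r - 2) * (y i) ^ 2) = T := by rw [hTdef]
          have hR1 : (∑ i, |(|x i| + |y i|) ^ (r - 2)| ^ (r/(r-2)))
              = ∑ i, (|x i| + |y i|) ^ r := by
            apply Finset.sum_congr rfl
            intro i _
            rw [abs_of_nonneg (Real.rpow_nonneg (hz0 i) _), ← Real.rpow_mul (hz0 i)]
            congr 1
            field_simp
          have hR2 : (∑ i, |(y i) ^ 2| ^ (r/2)) = Dy := by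
            rw [hDydef]
            apply Finset.sum_congr rfl
            intro i _
            rw [abs_of_nonneg (sq_nonneg _), ← sq_abs, ← Real.rpow_natCast |y i| 2,
              ← Real.rpow_mul (abs_nonneg _)]
            congr 1
            push_cast
            field_simp
          have hR3 : (∑ i, (|x i| + |y i|) ^ r) ^ (1/(r/(r-2))) = Nz ^ (r - 2) := by
            rw [hNzdef, ← Real.rpow_mul hZ0]
            congr 1
            field_simp
          have hR4 : Dy ^ (1/(r/2)) = Ny ^ (2:ℕ) := by
            rw [hNy2]
            congr 1
            field_simp
          rw [hL, hR1, hR2, hR3, hR4] at hH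
          exact hH
      -- Minkowski for z = |x| + |y|
      have hMz : Nz ≤ Nx + Ny := by
        have hmm := Real.Lp_add_le Finset.univ (fun i => |x i|) (fun i => |y i|)
          (by linarith : (1:ℝ) ≤ r)
        simp only [abs_abs] at hmm
        have he : (∑ i, |(|x i| + |y i|)| ^ r) = ∑ i, (|x i| + |y i|) ^ r := by
          apply Finset.sum_congr rfl
          intro i _
          rw [abs_of_nonneg (hz0 i)]
        rw [he] at hmm
        rw [hNzdef, hNxdef, hNydef, hBdef, hDydef]
        exact hmm
      -- Nz^(r-2) ≤ 3 Nx^(r-2)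
      have hNz2 : Nz ^ (r - 2) ≤ 3 * Nx ^ (r - 2) := by
        have hstep : Nz ≤ Nx * (1 + 1/r) := by
          have : Ny ≤ Nx * (1/r) := by
            rw [mul_one_div, le_div_iff₀ hr0]
            exact hNyNx
          calc Nz ≤ Nx + Ny := hMz
            _ ≤ Nx + Nx * (1/r) := by linarith
            _ = Nx * (1 + 1/r) := by ring
        have h1 : Nz ^ (r-2) ≤ (Nx * (1 + 1/r)) ^ (r-2) :=
          Real.rpow_le_rpow hNz0 hstep (by linarith)
        have h2 : (Nx * (1 + 1/r)) ^ (r-2) = Nx ^ (r-2) * (1 + 1/r) ^ (r-2) :=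
          Real.mul_rpow hNx0.le (by positivity)
        have h3 : (1 + 1/r) ^ (r-2) ≤ (1 + 1/r) ^ r :=
          Real.rpow_le_rpow_of_exponent_le (le_add_of_nonneg_right (by positivity)) (by linarith)
        have h4 : (1 + 1/r) ^ r ≤ Real.exp (1/r) ^ r := by
          apply Real.rpow_le_rpow (by positivity) _ hr0.le
          have := Real.add_one_le_exp (1/r)
          linarith
        have h5 : Real.exp (1/r) ^ r = Real.exp 1 := by
          rw [← Real.exp_mul]
          congr 1
          field_simp
        have h6 : Real.exp 1 ≤ 3 := by
          have := Real.exp_one_lt_d9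
          linarith
        have hNxp : 0 ≤ Nx ^ (r - 2) := Real.rpow_nonneg hNx0.le _
        calc Nz ^ (r-2) ≤ Nx ^ (r-2) * (1 + 1/r) ^ (r-2) := by rw [← h2]; exact h1
          _ ≤ Nx ^ (r-2) * 3 := by
              apply mul_le_mul_of_nonneg_left _ hNxp
              calc (1 + 1/r) ^ (r-2) ≤ (1 + 1/r) ^ r := h3
                _ ≤ Real.exp (1/r) ^ r := h4
                _ = Real.exp 1 := h5
                _ ≤ 3 := h6
          _ = 3 * Nx ^ (r-2) := by ring
      -- assemble
      have hEE : Nx ^ (2 - r) * Nx ^ (r - 2) = 1 := by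
        rw [← Real.rpow_add hNx0]
        norm_num
      have hET : E * T ≤ 3 * Ny ^ (2:ℕ) := by
        have hT' : T ≤ 3 * Nx ^ (r-2) * Ny ^ (2:ℕ) := by
          calc T ≤ Nz ^ (r-2) * Ny ^ (2:ℕ) := hT
            _ ≤ 3 * Nx ^ (r-2) * Ny ^ (2:ℕ) :=
                mul_le_mul_of_nonneg_right hNz2 (sq_nonneg _)
        calc E * T ≤ E * (3 * Nx ^ (r-2) * Ny ^ (2:ℕ)) :=
              mul_le_mul_of_nonneg_left hT' hE0.le
          _ = 3 * (Nx ^ (2-r) * Nx ^ (r-2)) * Ny ^ (2:ℕ) := by rw [hE]; ring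
          _ = 3 * Ny ^ (2:ℕ) := by rw [hEE]; ring
      have hcoef : (0:ℝ) ≤ 2/r * E := mul_nonneg (by positivity) hE0.le
      have hmul : (2/r) * E * (A - B) ≤ (2/r) * E * (r * Sψ + r * (r-1) * T) :=
        mul_le_mul_of_nonneg_left hsum hcoef
      have hsplit : (2/r) * E * (r * Sψ + r * (r-1) * T) = 2 * E * Sψ + 2 * (r-1) * (E * T) := by
        field_simp
      have hGE : (∑ j, y j * (2 * Nx ^ (2 - r) * |x j| ^ (r - 1) * Real.sign (x j)))
          = 2 * E * Sψ := by
        rw [hGG, hE]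
      rw [hA2, hGE]
      rw [show ((B:ℝ) ^ (1/r)) ^ (2:ℕ) = B ^ ((2:ℝ)/r) from sq_of_rpow hB0.le]
      have hfin : 2 * (r-1) * (E * T) ≤ 6 * (r-1) * Ny ^ (2:ℕ) := by
        have h1 : (0:ℝ) ≤ 2 * (r - 1) := by linarith
        have := mul_le_mul_of_nonneg_left hET h1
        linarith
      have h6 : 6 * (r-1) * Ny ^ (2:ℕ) ≤ 6 * r * Ny ^ (2:ℕ) :=
        mul_le_mul_of_nonneg_right (by linarith : 6 * (r-1) ≤ 6 * r) (sq_nonneg Ny)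
      linarith [hconc, hmul, hsplit.le, hsplit.symm.le, hfin, h6]
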